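/- Let $k$ be an uncountable field and $R$ an affine $k$-algebra (i.e., countable-dimensional over $k$). Then the Jacobson radical $J(R)$ is nil. -/
import Mathlib

open Polynomial

-- auxiliary: countable rank from affine
theorem stmt_14_aux_rank {k R : Type*} [Field k] [Ring R] [Algebra k R]
    (S : Finset R) (hS : Algebra.adjoin k (S : Set R) = ⊤) :
    Module.rank k R ≤ Cardinal.aleph0 := by
  have hspan : Submodule.span k ((Submonoid.closure (S : Set R) : Set R)) = ⊤ := by
    have h := Algebra.adjoin_eq_span k (S : Set R)
    rw [hS] at h
    simpa using h.symm
  have hc : ((Submonoid.closure (S : Set R) : Set R)).Countable := by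
    have hsub : (Submonoid.closure (S : Set R) : Set R) ⊆
        Set.range (fun l : List (S : Set R) => (l.map Subtype.val).prod) := by
      intro y hy
      obtain ⟨l, hl, hprod⟩ := Submonoid.exists_list_of_mem_closure hy
      refine ⟨l.attach.map (fun z => ⟨z.1, hl z.1 z.2⟩), ?_⟩
      simp only [List.map_map]
      rw [show (Subtype.val ∘ fun z : {x // x ∈ l} => (⟨z.1, hl z.1 z.2⟩ : (S : Set R)))
          = fun z : {x // x ∈ l} => z.1 from rfl]
      rw [List.attach_map_subtype_val]  -- guess name
      exact hprod
    exact (Set.countable_range _).mono hsub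
  have h1 := rank_span_le (R := k) (M := R) ((Submonoid.closure (S : Set R) : Set R))
  rw [hspan] at h1
  rw [rank_top] at h1
  exact h1.trans hc.le_aleph0

theorem stmt_14_aux_nil {k R : Type*} [Field k] [Ring R] [Algebra k R]
    (x : R) (hx : ∀ y : R, IsUnit (1 - x * y))
    (p : k[X]) (hp0 : p ≠ 0) (hpx : Polynomial.aeval x p = 0) : IsNilpotent x := by
  obtain ⟨q, hq, hndvd⟩ := p.exists_eq_pow_rootMultiplicity_mul_and_not_dvd hp0 0
  set m := p.rootMultiplicity 0 with hm
  rw [map_zero, sub_zero] at hq hndvd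
  have hc : q.coeff 0 ≠ 0 := fun h => hndvd (X_dvd_iff.mpr h)
  set c := q.coeff 0 with hcdef
  set w := Polynomial.aeval x (q.divX) with hw
  have hcomm : w * x = x * w := by
    have h1 : w * x = Polynomial.aeval x (q.divX * X) := by rw [map_mul, aeval_X]
    have h2 : x * w = Polynomial.aeval x (X * q.divX) := by rw [map_mul, aeval_X]
    rw [h1, h2, X_mul]
  have hqx : Polynomial.aeval x q = x * w + algebraMap k R c := by
    conv_lhs => rw [← q.divX_mul_X_add]
    simp only [map_add, map_mul, aeval_X, aeval_C]
    rw [hcomm]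
  have hcw : algebraMap k R c * (c⁻¹ • w) = w := by
    rw [← Algebra.smul_def, smul_smul, mul_inv_cancel₀ hc, one_smul]
  have hqunit : IsUnit (Polynomial.aeval x q) := by
    have key : Polynomial.aeval x q = algebraMap k R c * (1 - x * (-(c⁻¹ • w))) := by
      rw [mul_neg, sub_neg_eq_add, mul_add, mul_one, ← mul_assoc, Algebra.commutes c x,
        mul_assoc, hcw, hqx, add_comm]
    rw [key]
    exact ((isUnit_iff_ne_zero.mpr hc).map (algebraMap k R)).mul (hx _)
  have h0 : x ^ m * Polynomial.aeval x q = 0 := by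
    rw [← aeval_X_pow (R := k) (x := x), ← map_mul, ← hq, hpx]
  exact ⟨m, (IsUnit.mul_left_eq_zero hqunit).mp h0⟩

theorem stmt_14_aux_poly {k R : Type*} [Field k] [Uncountable k] [Ring R] [Algebra k R]
    [Nontrivial R] (hrank : Module.rank k R ≤ Cardinal.aleph0)
    (x : R) (hx : ∀ y : R, IsUnit (1 - x * y)) :
    ∃ p : k[X], p ≠ 0 ∧ Polynomial.aeval x p = 0 := by
  classical
  set ι := {a : k // a ≠ 0} with hι
  have huncount : Uncountable ι := by
    rw [← Cardinal.aleph0_lt_mk_iff]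
    by_contra h
    push_neg at h
    have hcount : Countable ι := Cardinal.mk_le_aleph0_iff.mp h
    have : (Set.univ : Set k).Countable := by
      have : (Set.univ : Set k) = {0} ∪ {a : k | a ≠ 0} := by
        ext a; simp [em]
      rw [this]
      exact (Set.countable_singleton 0).union (Set.countable_coe_iff.mp hcount)
    exact (not_countable (α := k)) (Set.countable_univ_iff.mp this)
  -- the units
  have hux : ∀ a : ι, 1 - x * ((a : k) • 1) = 1 - (a : k) • x := by
    intro a; rw [mul_smul_comm, mul_one]
  set u : ι → R := fun a => ↑((hx ((a : k) • 1)).unit)⁻¹ with hu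
  have huspec : ∀ a : ι, u a * (1 - (a : k) • x) = 1 := by
    intro a
    have h1 : (1 : R) - (a : k) • x = ↑((hx ((a : k) • 1)).unit) := by
      rw [(hx ((a : k) • 1)).unit_spec, hux a]
    rw [hu]
    simp only
    rw [h1, Units.inv_mul]
  -- not linearly independent
  have hnli : ¬ LinearIndependent k u := by
    intro h
    have h1 := h.cardinal_lift_le_rank
    have h2 := (Cardinal.lift_le.mpr hrank).trans_eq Cardinal.lift_aleph0
    have h4 : Cardinal.mk ι ≤ Cardinal.aleph0 := by
      have h3 := h1.trans h2
      rwa [Cardinal.lift_le_aleph0] at h3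
    exact absurd h4 (not_le.mpr (Cardinal.aleph0_lt_mk))
  rw [linearIndependent_iff'] at hnli
  push_neg at hnli
  obtain ⟨s, g, hsum, i₀, hi₀s, hgi₀⟩ := hnli
  -- the polynomial
  set P : ι → k[X] := fun i => ∏ j ∈ s.erase i, (1 - C (j : k) * X) with hP
  refine ⟨∑ i ∈ s, C (g i) * P i, ?_, ?_⟩
  · -- nonzero: evaluate at (i₀ : k)⁻¹
    intro hzero
    have heval := congrArg (Polynomial.eval ((i₀ : k)⁻¹)) hzero
    rw [eval_zero, eval_finset_sum] at heval
    have hterm : ∀ i ∈ s, i ≠ i₀ → Polynomial.eval ((i₀ : k)⁻¹) (C (g i) * P i) = 0 := by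
      intro i his hne
      rw [eval_mul, hP]
      simp only
      rw [eval_prod]
      rw [Finset.prod_eq_zero (Finset.mem_erase.mpr ⟨hne.symm, hi₀s⟩)]
      · ring
      · simp [mul_inv_cancel₀ i₀.2]
    rw [Finset.sum_eq_single i₀ (fun i his hne => hterm i his hne) (fun h => absurd hi₀s h)]
        at heval
    rw [eval_mul, eval_C, hP] at heval
    simp only [eval_prod] at heval
    have hprodne : ∏ j ∈ s.erase i₀, Polynomial.eval ((i₀ : k)⁻¹) (1 - C (j : k) * X) ≠ 0 := by
      apply Finset.prod_ne_zero_iff.mpr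
      intro j hj
      simp only [eval_sub, eval_one, eval_mul, eval_C, eval_X]
      intro habs
      have h5 : (j : k) * (i₀ : k)⁻¹ = 1 := (sub_eq_zero.mp habs).symm
      have h6 : (j : k) = (i₀ : k) := by
        have := mul_right_cancel₀ (inv_ne_zero i₀.2) (h5.trans (mul_inv_cancel₀ i₀.2).symm)
        exact this
      exact (Finset.mem_erase.mp hj).1 (Subtype.ext h6)
    exact hgi₀ (by
      rcases mul_eq_zero.mp heval with h | h
      · exact h
      · exact absurd h hprodne)
  · -- aeval x p = 0
    have key : ∀ i ∈ s, u i * Polynomial.aeval x (∏ j ∈ s, (1 - C (j : k) * X))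
        = Polynomial.aeval x (P i) := by
      intro i his
      rw [← Finset.mul_prod_erase _ _ his, map_mul, ← mul_assoc]
      have : Polynomial.aeval x (1 - C (i : k) * X) = 1 - (i : k) • x := by
        simp [Algebra.smul_def]
      rw [this, huspec i, one_mul, hP]
    have hz : (∑ i ∈ s, g i • u i) * Polynomial.aeval x (∏ j ∈ s, (1 - C (j : k) * X)) = 0 := by
      rw [hsum, zero_mul]
    rw [Finset.sum_mul] at hz
    simp only [smul_mul_assoc] at hz
    rw [Finset.sum_congr rfl (fun i his => by rw [key i his])] at hz
    rw [map_sum]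
    rw [Finset.sum_congr rfl (fun i his => by
      rw [map_mul, aeval_C, ← Algebra.smul_def] : ∀ i ∈ s,
        Polynomial.aeval x (C (g i) * P i) = g i • Polynomial.aeval x (P i))]
    exact hz

theorem stmt_14 {k R : Type*} [Field k] [Uncountable k] [Ring R] [Algebra k R]
    (haffine : ∃ S : Finset R, Algebra.adjoin k (S : Set R) = ⊤) :
    ∀ x : R, (∀ y : R, IsUnit (1 - x * y)) → IsNilpotent x := by
  intro x hx
  rcases subsingleton_or_nontrivial R with h | h
  · exact ⟨1, Subsingleton.elim _ _⟩
  · obtain ⟨S, hS⟩ := haffine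
    have hrank := stmt_14_aux_rank S hS
    obtain ⟨p, hp0, hpx⟩ := stmt_14_aux_poly hrank x hx
    exact stmt_14_aux_nil x hx p hp0 hpx
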